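/- Let G=(V,E) be a finite simple graph with a decomposition V = A ∪ B ∪ C satisfying properties (1): d_B(a) ≥ d_A(a)+max{1,d_C(a)} for a ∈ A, and (2): d_A(b) ≥ d_B(b)+max{1,d_C(b)} for b ∈ B. Then #E(A,B) ≥ #E(A,A) + #E(B,B) + (|A|+|B|)/2. -/

import Mathlib

open Finset

variable {V : Type*} [Fintype V] [DecidableEq V]

/-- Number of neighbors of `v` lying in `S`. -/
def degIn (G : SimpleGraph V) [DecidableRel G.Adj] (v : V) (S : Finset V) : ℕ :=
  (S.filter (G.Adj v)).card

/-- Number of edges with one endpoint in `X` and the other in `Y`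
(each edge counted once; for `X = Y` this is the number of edges inside `X`). -/
def eBtw (G : SimpleGraph V) [DecidableRel G.Adj] (X Y : Finset V) : ℕ :=
  (G.edgeFinset.filter (fun e => ∃ x ∈ X, ∃ y ∈ Y, e = s(x, y))).card

/-- induced graph on `A` -/
def gIn (G : SimpleGraph V) [DecidableRel G.Adj] (A : Finset V) : SimpleGraph V where
  Adj x y := G.Adj x y ∧ x ∈ A ∧ y ∈ A
  symm := ⟨by intro x y ⟨h, hx, hy⟩; exact ⟨h.symm, hy, hx⟩⟩
  loopless := ⟨fun x ⟨h, _⟩ => G.ne_of_adj h rfl⟩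

instance (G : SimpleGraph V) [DecidableRel G.Adj] (A : Finset V) :
    DecidableRel (gIn G A).Adj := fun x y => by
  dsimp [gIn]; infer_instance

/-- bipartite graph between `A` and `B` -/
def gBip (G : SimpleGraph V) [DecidableRel G.Adj] (A B : Finset V) : SimpleGraph V where
  Adj x y := G.Adj x y ∧ ((x ∈ A ∧ y ∈ B) ∨ (x ∈ B ∧ y ∈ A))
  symm := ⟨by intro x y ⟨h, hxy⟩; exact ⟨h.symm, hxy.symm.imp And.symm And.symm⟩⟩
  loopless := ⟨fun x ⟨h, _⟩ => G.ne_of_adj h rfl⟩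

instance (G : SimpleGraph V) [DecidableRel G.Adj] (A B : Finset V) :
    DecidableRel (gBip G A B).Adj := fun x y => by
  dsimp [gBip]; infer_instance

lemma gIn_edgeFinset (G : SimpleGraph V) [DecidableRel G.Adj] (A : Finset V) :
    (gIn G A).edgeFinset =
      G.edgeFinset.filter (fun e => ∃ x ∈ A, ∃ y ∈ A, e = s(x, y)) := by
  ext e
  refine Sym2.ind (fun u v => ?_) e
  simp only [SimpleGraph.mem_edgeFinset, SimpleGraph.mem_edgeSet, mem_filter]
  simp only [gIn]
  constructor
  · rintro ⟨h, hu, hv⟩; exact ⟨h, u, hu, v, hv, rfl⟩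
  · rintro ⟨h, x, hx, y, hy, heq⟩
    rw [Sym2.eq_iff] at heq
    rcases heq with ⟨rfl, rfl⟩ | ⟨rfl, rfl⟩
    · exact ⟨h, hx, hy⟩
    · exact ⟨h, hy, hx⟩

lemma gBip_edgeFinset (G : SimpleGraph V) [DecidableRel G.Adj] (A B : Finset V) :
    (gBip G A B).edgeFinset =
      G.edgeFinset.filter (fun e => ∃ x ∈ A, ∃ y ∈ B, e = s(x, y)) := by
  ext e
  refine Sym2.ind (fun u v => ?_) e
  simp only [SimpleGraph.mem_edgeFinset, SimpleGraph.mem_edgeSet, mem_filter]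
  simp only [gBip]
  constructor
  · rintro ⟨h, ⟨hu, hv⟩ | ⟨hu, hv⟩⟩
    · exact ⟨h, u, hu, v, hv, rfl⟩
    · exact ⟨h, v, hv, u, hu, Sym2.eq_swap⟩
  · rintro ⟨h, x, hx, y, hy, heq⟩
    rw [Sym2.eq_iff] at heq
    rcases heq with ⟨rfl, rfl⟩ | ⟨rfl, rfl⟩
    · exact ⟨h, Or.inl ⟨hx, hy⟩⟩
    · exact ⟨h, Or.inr ⟨hy, hx⟩⟩

lemma gIn_degree (G : SimpleGraph V) [DecidableRel G.Adj] (A : Finset V) (v : V) :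
    (gIn G A).degree v = if v ∈ A then degIn G v A else 0 := by
  rw [SimpleGraph.degree, SimpleGraph.neighborFinset]
  by_cases hv : v ∈ A
  · simp only [if_pos hv]
    congr 1
    ext w
    simp [gIn, degIn, hv, and_comm]
  · simp only [if_neg hv]
    rw [Finset.card_eq_zero]
    ext w
    rw [Set.mem_toFinset]
    simp [gIn, hv]

lemma gBip_degree (G : SimpleGraph V) [DecidableRel G.Adj] {A B : Finset V}
    (hAB : Disjoint A B) (v : V) :
    (gBip G A B).degree v =
      if v ∈ A then degIn G v B else if v ∈ B then degIn G v A else 0 := by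
  rw [SimpleGraph.degree, SimpleGraph.neighborFinset]
  by_cases hvA : v ∈ A
  · have hvB : v ∉ B := fun h => (Finset.disjoint_left.mp hAB hvA) h
    simp only [if_pos hvA]
    congr 1
    ext w
    by_cases hwA : w ∈ A <;> by_cases hwB : w ∈ B <;>
      simp [gBip, degIn, hvA, hvB, hwA, hwB, and_comm]
  · simp only [if_neg hvA]
    by_cases hvB : v ∈ B
    · simp only [if_pos hvB]
      congr 1
      ext w
      by_cases hwA : w ∈ A <;> by_cases hwB : w ∈ B <;>
        simp [gBip, degIn, hvA, hvB, hwA, hwB, and_comm,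
          fun h => Finset.disjoint_left.mp hAB h]
    · simp only [if_neg hvB]
      rw [Finset.card_eq_zero]
      ext w
      rw [Set.mem_toFinset]
      simp [gBip, hvA, hvB]

lemma sum_degIn_self (G : SimpleGraph V) [DecidableRel G.Adj] (A : Finset V) :
    ∑ a ∈ A, degIn G a A = 2 * eBtw G A A := by
  have h := SimpleGraph.sum_degrees_eq_twice_card_edges (gIn G A)
  have key : ∑ v, (gIn G A).degree v = ∑ a ∈ A, degIn G a A := by
    calc ∑ v, (gIn G A).degree v = ∑ v, if v ∈ A then degIn G v A else 0 :=
          Finset.sum_congr rfl (fun v _ => gIn_degree G A v)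
      _ = ∑ a ∈ A, degIn G a A := by
          rw [Finset.sum_ite_mem, Finset.univ_inter]
  rw [key] at h
  rw [h, eBtw, ← gIn_edgeFinset]

lemma sum_degIn_cross (G : SimpleGraph V) [DecidableRel G.Adj] {A B : Finset V}
    (hAB : Disjoint A B) :
    ∑ a ∈ A, degIn G a B + ∑ b ∈ B, degIn G b A = 2 * eBtw G A B := by
  have h := SimpleGraph.sum_degrees_eq_twice_card_edges (gBip G A B)
  have key : ∑ v, (gBip G A B).degree v
      = ∑ a ∈ A, degIn G a B + ∑ b ∈ B, degIn G b A := by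
    have hsub : A ∪ B ⊆ Finset.univ := Finset.subset_univ _
    rw [show (Finset.univ : Finset V) = Finset.univ from rfl]
    rw [← Finset.sum_subset hsub (fun v _ hv => ?_)]
    · rw [Finset.sum_union hAB]
      congr 1
      · refine Finset.sum_congr rfl (fun v hv => ?_)
        rw [gBip_degree G hAB v, if_pos hv]
      · refine Finset.sum_congr rfl (fun v hv => ?_)
        have hvA : v ∉ A := fun h => Finset.disjoint_left.mp hAB h hv
        rw [gBip_degree G hAB v, if_neg hvA, if_pos hv]
    · simp only [Finset.mem_union, not_or] at hv
      rw [gBip_degree G hAB v, if_neg hv.1, if_neg hv.2]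
  rw [key] at h
  rw [h, eBtw, ← gBip_edgeFinset]

theorem cut_lower_bound (G : SimpleGraph V) [DecidableRel G.Adj]
    (A B C : Finset V)
    (hU : A ∪ B ∪ C = Finset.univ)
    (hAB : Disjoint A B) (hAC : Disjoint A C) (hBC : Disjoint B C)
    (h1 : ∀ a ∈ A, degIn G a A + max 1 (degIn G a C) ≤ degIn G a B)
    (h2 : ∀ b ∈ B, degIn G b B + max 1 (degIn G b C) ≤ degIn G b A) :
    (eBtw G A A : ℚ) + eBtw G B B + (A.card + B.card) / 2 ≤ eBtw G A B := by
  have hA : ∑ a ∈ A, (degIn G a A + 1) ≤ ∑ a ∈ A, degIn G a B :=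
    Finset.sum_le_sum (fun a ha => le_trans
      (by have := le_max_left 1 (degIn G a C); omega) (h1 a ha))
  have hB : ∑ b ∈ B, (degIn G b B + 1) ≤ ∑ b ∈ B, degIn G b A :=
    Finset.sum_le_sum (fun b hb => le_trans
      (by have := le_max_left 1 (degIn G b C); omega) (h2 b hb))
  rw [Finset.sum_add_distrib, Finset.sum_const, smul_eq_mul, mul_one,
    sum_degIn_self] at hA hB
  have hcross := sum_degIn_cross G hAB
  have key : 2 * eBtw G A A + A.card + (2 * eBtw G B B + B.card) ≤ 2 * eBtw G A B := by
    omega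
  have := Nat.cast_le (α := ℚ) |>.mpr key
  push_cast at this
  linarith
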